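/- Let $z$ be a complex number with $|z| = 1$ and $|\arg z| \le \theta$ for some real $\theta \ge 0$. Then for any real $0 < p < 1$, $\left|\frac{z - (1-p)}{p}\right| \le 1 + \frac{\theta^2}{p^2}$. -/

import Mathlib

theorem stmt2 (z : ℂ) (θ : ℝ) (hθ : 0 ≤ θ) (hz : ‖z‖ = 1)
    (harg : |Complex.arg z| ≤ θ) (p : ℝ) (hp0 : 0 < p) (hp1 : p < 1) :
    ‖(z - (1 - p)) / p‖ ≤ 1 + θ ^ 2 / p ^ 2 := by
  have hz0 : z ≠ 0 := by
    intro h; rw [h] at hz; simp at hz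
  set φ := Complex.arg z with hφ
  have hre : z.re = Real.cos φ := by
    have := Complex.cos_arg hz0
    rw [hz] at this; rw [this]; ring
  have him : z.im = Real.sin φ := by
    have := Complex.sin_arg z
    rw [hz] at this; rw [this]; ring
  have hcos : 1 - φ ^ 2 / 2 ≤ Real.cos φ := Real.one_sub_sq_div_two_le_cos
  have hφθ : φ ^ 2 ≤ θ ^ 2 := by
    have := abs_nonneg φ
    nlinarith [harg, neg_abs_le φ, le_abs_self φ]
  have hkey : ‖z - (1 - p)‖ ≤ p + θ ^ 2 / p := by
    have hsq : (‖z - (1 - p)‖) ^ 2 ≤ (p + θ ^ 2 / p) ^ 2 := by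
      rw [Complex.sq_norm, Complex.normSq_apply]
      have hre' : (z - (1 - p)).re = Real.cos φ - (1 - p) := by
        simp [Complex.sub_re, hre]
      have him' : (z - (1 - p)).im = Real.sin φ := by
        simp [Complex.sub_im, him]
      rw [hre', him']
      have hpyth : Real.sin φ ^ 2 + Real.cos φ ^ 2 = 1 := Real.sin_sq_add_cos_sq φ
      have h1 : Real.cos φ ≤ 1 := Real.cos_le_one φ
      have hθp : θ ^ 2 / p * p = θ ^ 2 := div_mul_cancel₀ _ hp0.ne'
      nlinarith [sq_nonneg (θ ^ 2 / p), mul_nonneg hp0.le (sub_nonneg.2 h1), hθp,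
        mul_nonneg (sq_nonneg θ) (sq_nonneg (θ / p))]
    have h2 : 0 ≤ p + θ ^ 2 / p := by positivity
    nlinarith [norm_nonneg (z - (1 - p))]
  calc ‖(z - (1 - p)) / p‖ = ‖z - (1 - p)‖ / p := by
        rw [norm_div, Complex.norm_real, Real.norm_eq_abs, abs_of_pos hp0]
      _ ≤ (p + θ ^ 2 / p) / p := by
        gcongr
      _ = 1 + θ ^ 2 / p ^ 2 := by field_simp
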